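/- If B is a weak c-ideal of a finite-dimensional Lie algebra L, then B/B_L has a subideal complement in L/B_L, i.e., there is a subideal C/B_L of L/B_L with L/B_L = B/B_L + C/B_L and B/B_L ∩ C/B_L = 0. Conversely, if B/B_L has a subideal complement in L/B_L, then B is a weak c-ideal of L. -/

import Mathlib

open LieAlgebra Module

section Defs

variable (F : Type*) [Field F] {L : Type*} [LieRing L] [LieAlgebra F L]

/-- `A` is an ideal of `B`, where `A` and `B` are subalgebras of `L`. -/
def IsIdealOf (A B : LieSubalgebra F L) : Prop :=
  A ≤ B ∧ ∀ x ∈ B, ∀ y ∈ A, ⁅x, y⁆ ∈ A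

/-- `C` is a subideal of `L`: there is a chain of subalgebras from `C` to `L`,
each an ideal in the next. -/
def IsSubideal (C : LieSubalgebra F L) : Prop :=
  ∃ (n : ℕ) (f : ℕ → LieSubalgebra F L),
    f 0 = C ∧ f n = ⊤ ∧ ∀ i < n, IsIdealOf F (f i) (f (i + 1))

/-- The core `B_L` of a subalgebra `B`: the largest ideal of `L` contained in `B`. -/
def lieCore (B : LieSubalgebra F L) : LieIdeal F L :=
  sSup {I : LieIdeal F L | (I : Set L) ⊆ (B : Set L)}

/-- `B` is a weak c-ideal of `L`. -/
def IsWeakCIdeal (B : LieSubalgebra F L) : Prop :=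
  ∃ C : LieSubalgebra F L, IsSubideal F C ∧ B ⊔ C = ⊤ ∧
    ((B ⊓ C : LieSubalgebra F L) : Set L) ⊆ (lieCore F B : Set L)

/-- `B` is a c-ideal of `L`. -/
def IsCIdeal (B : LieSubalgebra F L) : Prop :=
  ∃ C : LieSubalgebra F L, (∀ x : L, ∀ y ∈ C, ⁅x, y⁆ ∈ C) ∧ B ⊔ C = ⊤ ∧
    ((B ⊓ C : LieSubalgebra F L) : Set L) ⊆ (lieCore F B : Set L)

/-- `M` is a maximal subalgebra of `L`. -/
def IsMaxSubalgebra (M : LieSubalgebra F L) : Prop :=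
  M ≠ ⊤ ∧ ∀ K : LieSubalgebra F L, M < K → K = ⊤

/-- `B` is a maximal subalgebra of the subalgebra `C`. -/
def IsMaxSubalgebraIn (B C : LieSubalgebra F L) : Prop :=
  B < C ∧ ∀ K : LieSubalgebra F L, B < K → K ≤ C → K = C

/-- `C` is a maximal nilpotent subalgebra of `L`. -/
def IsMaxNilpotentSubalgebra (C : LieSubalgebra F L) : Prop :=
  LieModule.IsNilpotent C C ∧
    ∀ D : LieSubalgebra F L, LieModule.IsNilpotent D D → C ≤ D → C = D

/-- The quotient map `L → L ⧸ I` as a morphism of Lie algebras. -/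
def quotHom (I : LieIdeal F L) : L →ₗ⁅F⁆ L ⧸ I :=
  { (LieSubmodule.Quotient.mk' I).toLinearMap with
    map_lie' := fun {_ _} => rfl }

end Defs


section Aux

variable {F : Type*} [Field F] {L : Type*} [LieRing L] [LieAlgebra F L]

lemma lieCore_le (B : LieSubalgebra F L) {x : L} (hx : x ∈ lieCore F B) : x ∈ B := by
  have h : (lieCore F B).toSubmodule ≤ B.toSubmodule := by
    rw [lieCore, LieSubmodule.sSup_toSubmodule]
    apply sSup_le
    rintro p ⟨I, hI, rfl⟩
    intro y hy
    exact hI hy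
  exact h hx

lemma quotHom_surjective (I : LieIdeal F L) : Function.Surjective (quotHom F I) :=
  LieSubmodule.Quotient.surjective_mk' I

lemma quotHom_eq_zero_iff (I : LieIdeal F L) {x : L} : quotHom F I x = 0 ↔ x ∈ I :=
  LieSubmodule.Quotient.mk_eq_zero' (N := I)

lemma IsSubideal.map {L₂ : Type*} [LieRing L₂] [LieAlgebra F L₂] {C : LieSubalgebra F L}
    (h : IsSubideal F C) (f : L →ₗ⁅F⁆ L₂) (hf : Function.Surjective f) :
    IsSubideal F (C.map f) := by
  obtain ⟨n, g, h0, hn, hchain⟩ := h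
  have gc : GaloisConnection (LieSubalgebra.map f) (LieSubalgebra.comap f) :=
    fun _ _ => LieSubalgebra.map_le_iff_le_comap
  refine ⟨n, fun i => (g i).map f, by show (g 0).map f = _; rw [h0], ?_, ?_⟩
  · show (g n).map f = ⊤
    rw [hn, eq_top_iff]
    intro x _
    obtain ⟨y, rfl⟩ := hf x
    rw [LieSubalgebra.mem_map]
    exact ⟨y, trivial, rfl⟩
  · intro i hi
    obtain ⟨hle, hid⟩ := hchain i hi
    refine ⟨gc.monotone_l hle, ?_⟩
    intro x hx y hy
    rw [LieSubalgebra.mem_map] at hx hy ⊢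
    obtain ⟨a, ha, rfl⟩ := hx
    obtain ⟨b, hb, rfl⟩ := hy
    exact ⟨⁅a, b⁆, hid a ha b hb, f.map_lie a b⟩

lemma IsSubideal.comap {L₂ : Type*} [LieRing L₂] [LieAlgebra F L₂] {C : LieSubalgebra F L₂}
    (h : IsSubideal F C) (f : L →ₗ⁅F⁆ L₂) :
    IsSubideal F (C.comap f) := by
  obtain ⟨n, g, h0, hn, hchain⟩ := h
  refine ⟨n, fun i => (g i).comap f, by show (g 0).comap f = _; rw [h0], ?_, ?_⟩
  · show (g n).comap f = ⊤
    rw [hn, eq_top_iff]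
    intro x _
    exact LieSubalgebra.mem_top _
  · intro i hi
    obtain ⟨hle, hid⟩ := hchain i hi
    refine ⟨fun x hx => hle hx, ?_⟩
    intro x hx y hy
    show f ⁅x, y⁆ ∈ g i
    rw [f.map_lie]
    exact hid (f x) hx (f y) hy

end Aux

theorem isWeakCIdeal_iff_complement {F : Type*} [Field F] {L : Type*} [LieRing L] [LieAlgebra F L]
    [FiniteDimensional F L] (B : LieSubalgebra F L) :
    IsWeakCIdeal F B ↔
      ∃ C : LieSubalgebra F (L ⧸ lieCore F B), IsSubideal F C ∧
        B.map (quotHom F (lieCore F B)) ⊔ C = ⊤ ∧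
        B.map (quotHom F (lieCore F B)) ⊓ C = ⊥ := by
  set φ := quotHom F (lieCore F B) with hφ
  have hsurj : Function.Surjective φ := quotHom_surjective _
  have gc : GaloisConnection (LieSubalgebra.map φ) (LieSubalgebra.comap φ) :=
    fun _ _ => LieSubalgebra.map_le_iff_le_comap
  constructor
  · rintro ⟨C, hC, hsup, hint⟩
    refine ⟨C.map φ, hC.map φ hsurj, ?_, ?_⟩
    · rw [← gc.l_sup, hsup]
      rw [eq_top_iff]
      intro x _
      obtain ⟨y, rfl⟩ := hsurj x
      rw [LieSubalgebra.mem_map]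
      exact ⟨y, trivial, rfl⟩
    · rw [eq_bot_iff]
      intro x hx
      rw [LieSubalgebra.mem_inf] at hx
      obtain ⟨hxB, hxC⟩ := hx
      rw [LieSubalgebra.mem_map] at hxB hxC
      obtain ⟨b, hb, hbx⟩ := hxB
      obtain ⟨c, hc, hcx⟩ := hxC
      have hbc : φ (b - c) = 0 := by
        rw [show φ (b - c) = φ b - φ c from φ.toLinearMap.map_sub b c, hbx, hcx, sub_self]
      have hbcore : b - c ∈ lieCore F B := (quotHom_eq_zero_iff _).1 hbc
      have hcB : c ∈ B := by
        have : b - (b - c) ∈ B := B.sub_mem hb (lieCore_le B hbcore)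
        simpa using this
      have : c ∈ lieCore F B := hint ⟨hcB, hc⟩
      rw [LieSubalgebra.mem_bot, ← hcx]
      exact (quotHom_eq_zero_iff _).2 this
  · rintro ⟨C', hC', hsup, hint⟩
    refine ⟨C'.comap φ, hC'.comap φ, ?_, ?_⟩
    · rw [eq_top_iff]
      intro x _
      have hmapcomap : LieSubalgebra.map φ (C'.comap φ) = C' := by
        apply le_antisymm
        · intro z hz
          rw [LieSubalgebra.mem_map] at hz
          obtain ⟨y, hy, rfl⟩ := hz
          exact hy
        · intro z hz
          obtain ⟨y, rfl⟩ := hsurj z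
          rw [LieSubalgebra.mem_map]
          exact ⟨y, hz, rfl⟩
      have hx : φ x ∈ LieSubalgebra.map φ (B ⊔ C'.comap φ) := by
        rw [gc.l_sup, hmapcomap, hsup]
        exact LieSubalgebra.mem_top _
      rw [LieSubalgebra.mem_map] at hx
      obtain ⟨y, hy, hyx⟩ := hx
      have hxy : x - y ∈ lieCore F B := by
        apply (quotHom_eq_zero_iff _).1
        rw [show φ (x - y) = φ x - φ y from φ.toLinearMap.map_sub x y, hyx, sub_self]
      have hxyC : x - y ∈ C'.comap φ := by
        show φ (x - y) ∈ C'
        rw [(quotHom_eq_zero_iff _).2 hxy]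
        exact C'.zero_mem
      have : y + (x - y) ∈ B ⊔ C'.comap φ :=
        (B ⊔ C'.comap φ).add_mem hy (le_sup_right (α := LieSubalgebra F L) hxyC)
      simpa using this
    · intro x hx
      rw [SetLike.mem_coe, LieSubalgebra.mem_inf] at hx
      obtain ⟨hxB, hxC⟩ := hx
      have : φ x ∈ B.map φ ⊓ C' := by
        rw [LieSubalgebra.mem_inf]
        refine ⟨?_, hxC⟩
        rw [LieSubalgebra.mem_map]
        exact ⟨x, hxB, rfl⟩
      rw [hint, LieSubalgebra.mem_bot] at this
      exact (quotHom_eq_zero_iff _).1 this
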